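/- For the Leibniz algebra RNF_n (n ≥ 2), the values tr(ad x)·tr(ad y)/tr((ad x)∘(ad y)) are independent of x, y (whenever the denominator is nonzero) and equal 3n(n+1)/(2(2n+1)). -/

import Mathlib

/-- Coordinate of `u` at a natural-number index, zero out of range. -/
def cf {m : ℕ} (u : Fin m → ℂ) (j : ℕ) : ℂ := if h : j < m then u ⟨j, h⟩ else 0

/-- The `j`-th coordinate vector of `Fin m → ℂ` (0-based). -/
def ev (m j : ℕ) : Fin m → ℂ := fun k => if (k : ℕ) = j then 1 else 0

/-- The bracket of `RNF_n` on the basis `e_1, …, e_n, x`: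
`[e_i,e_1] = e_{i+1}` (`1 ≤ i ≤ n-1`), `[x,e_1] = -e_1`, `[e_i,x] = i·e_i`
(`1 ≤ i ≤ n`), other products zero. -/
def rnfBr (n : ℕ) (u v : Fin (n + 1) → ℂ) : Fin (n + 1) → ℂ := fun k =>
  if (k : ℕ) = 0 then -(cf u n) * cf v 0 + cf u 0 * cf v n
  else if (k : ℕ) < n then
    cf u ((k : ℕ) - 1) * cf v 0 + (((k : ℕ) : ℂ) + 1) * cf u (k : ℕ) * cf v n
  else 0

/-- The matrix of the operator `ad z : w ↦ [w, z]` of `RNF_n` in the basis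
`e_1, …, e_n, x`. -/
def adM (n : ℕ) (z : Fin (n + 1) → ℂ) : Matrix (Fin (n + 1)) (Fin (n + 1)) ℂ :=
  Matrix.of fun i j => rnfBr n (ev (n + 1) (j : ℕ)) z i

/-- Shift part of `adM`. -/
def Smat (n : ℕ) : Matrix (Fin (n + 1)) (Fin (n + 1)) ℂ :=
  Matrix.of fun i j =>
    if (i : ℕ) = 0 ∧ (j : ℕ) = n then -1
    else if 0 < (i : ℕ) ∧ (i : ℕ) < n ∧ (j : ℕ) = (i : ℕ) - 1 then 1 else 0

/-- Diagonal part of `adM`. -/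
def dvec (n : ℕ) : Fin (n + 1) → ℂ := fun i => if (i : ℕ) < n then ((i : ℕ) : ℂ) + 1 else 0

lemma cf_ev (m j k : ℕ) (hk : k < m) : cf (ev m j) k = if k = j then 1 else 0 := by
  simp [cf, ev, hk]

lemma adM_decomp (n : ℕ) (hn : 1 ≤ n) (z : Fin (n + 1) → ℂ) :
    adM n z = cf z 0 • Smat n + cf z n • Matrix.diagonal (dvec n) := by
  ext i j
  simp only [adM, Matrix.of_apply, rnfBr, Matrix.add_apply, Matrix.smul_apply,
    Smat, Matrix.diagonal_apply, dvec, smul_eq_mul, Fin.ext_iff]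
  rw [cf_ev _ _ 0 (by omega), cf_ev _ _ n (by omega),
    cf_ev _ _ ((i : ℕ) - 1) (by omega), cf_ev _ _ (i : ℕ) (by omega)]
  split_ifs <;>
    first
      | ring1
      | (exfalso; omega)
      | (simp_all; done)
      | (simp_all; ring1)
      | (simp_all; exfalso; omega)
      | (simp_all; have h0 : (j : ℕ) = 0 := (by omega); rw [h0]; norm_num)
      | (have h0 : (j : ℕ) = 0 := (by omega); rw [h0]; norm_num)

lemma trace_Smat (n : ℕ) (hn : 1 ≤ n) : Matrix.trace (Smat n) = 0 := by
  unfold Matrix.trace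
  apply Finset.sum_eq_zero
  intro i _
  simp only [Matrix.diag_apply, Smat, Matrix.of_apply]
  split_ifs <;> first | rfl | (exfalso; omega)

lemma trace_SS (n : ℕ) (hn : 1 ≤ n) : Matrix.trace (Smat n * Smat n) = 0 := by
  simp only [Matrix.trace, Matrix.diag_apply, Matrix.mul_apply]
  apply Finset.sum_eq_zero
  intro i _
  apply Finset.sum_eq_zero
  intro j _
  simp only [Smat, Matrix.of_apply]
  split_ifs <;> first | ring1 | (exfalso; omega)

lemma trace_SD (n : ℕ) (hn : 1 ≤ n) :
    Matrix.trace (Smat n * Matrix.diagonal (dvec n)) = 0 := by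
  simp only [Matrix.trace, Matrix.diag_apply, Matrix.mul_diagonal]
  apply Finset.sum_eq_zero
  intro i _
  simp only [Smat, Matrix.of_apply]
  split_ifs <;> first | ring1 | (exfalso; omega)

lemma trace_DS (n : ℕ) (hn : 1 ≤ n) :
    Matrix.trace (Matrix.diagonal (dvec n) * Smat n) = 0 := by
  simp only [Matrix.trace, Matrix.diag_apply, Matrix.diagonal_mul]
  apply Finset.sum_eq_zero
  intro i _
  simp only [Smat, Matrix.of_apply]
  split_ifs <;> first | ring1 | (exfalso; omega)

lemma sum_d (n : ℕ) :
    (∑ i : Fin (n + 1), dvec n i) = ∑ i ∈ Finset.range n, ((i : ℂ) + 1) := by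
  have h := Fin.sum_univ_eq_sum_range (fun j : ℕ => if j < n then ((j : ℂ) + 1) else 0) (n + 1)
  rw [show (∑ i : Fin (n + 1), dvec n i)
      = ∑ i : Fin (n + 1), (fun j : ℕ => if j < n then ((j : ℂ) + 1) else 0) (i : ℕ) from rfl,
    h, Finset.sum_range_succ]
  simp only [lt_irrefl, if_neg, ite_false, add_zero]
  exact Finset.sum_congr rfl fun i hi => if_pos (Finset.mem_range.mp hi)

lemma sum_d2 (n : ℕ) :
    (∑ i : Fin (n + 1), dvec n i * dvec n i)
      = ∑ i ∈ Finset.range n, ((i : ℂ) + 1) ^ 2 := by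
  have h := Fin.sum_univ_eq_sum_range
    (fun j : ℕ => if j < n then ((j : ℂ) + 1) ^ 2 else 0) (n + 1)
  rw [show (∑ i : Fin (n + 1), dvec n i * dvec n i)
      = ∑ i : Fin (n + 1), (fun j : ℕ => if j < n then ((j : ℂ) + 1) ^ 2 else 0) (i : ℕ) by
      refine Finset.sum_congr rfl fun i _ => ?_
      simp only [dvec]
      split_ifs <;> ring,
    h, Finset.sum_range_succ]
  simp only [lt_irrefl, if_neg, ite_false, add_zero]
  exact Finset.sum_congr rfl fun i hi => if_pos (Finset.mem_range.mp hi)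

lemma gauss1 (n : ℕ) :
    2 * ∑ i ∈ Finset.range n, ((i : ℂ) + 1) = (n : ℂ) * ((n : ℂ) + 1) := by
  induction n with
  | zero => simp
  | succ m ih =>
    rw [Finset.sum_range_succ, mul_add, ih]
    push_cast
    ring

lemma gauss2 (n : ℕ) :
    6 * ∑ i ∈ Finset.range n, ((i : ℂ) + 1) ^ 2
      = (n : ℂ) * ((n : ℂ) + 1) * (2 * (n : ℂ) + 1) := by
  induction n with
  | zero => simp
  | succ m ih =>
    rw [Finset.sum_range_succ, mul_add, ih]
    push_cast
    ring

lemma trace_adM (n : ℕ) (hn : 1 ≤ n) (z : Fin (n + 1) → ℂ) :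
    Matrix.trace (adM n z) = cf z n * ∑ i : Fin (n + 1), dvec n i := by
  rw [adM_decomp n hn z, Matrix.trace_add, Matrix.trace_smul, Matrix.trace_smul,
    trace_Smat n hn, Matrix.trace_diagonal]
  simp [smul_eq_mul]

lemma trace_mul_adM (n : ℕ) (hn : 1 ≤ n) (x y : Fin (n + 1) → ℂ) :
    Matrix.trace (adM n x * adM n y)
      = cf x n * cf y n * ∑ i : Fin (n + 1), dvec n i * dvec n i := by
  rw [adM_decomp n hn x, adM_decomp n hn y]
  simp only [Matrix.add_mul, Matrix.mul_add, smul_mul_assoc, mul_smul_comm, smul_smul,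
    Matrix.trace_add, Matrix.trace_smul, smul_eq_mul]
  rw [trace_SS n hn, trace_SD n hn, trace_DS n hn, Matrix.diagonal_mul_diagonal,
    Matrix.trace_diagonal]
  simp only [Pi.mul_apply, mul_zero, add_zero, zero_add]
  ring

/-- For `RNF_n` (`n ≥ 2`) the quantity `tr(ad x)·tr(ad y)/tr(ad x ∘ ad y)` is
independent of `x, y` (whenever the denominator is nonzero) and equals
`3n(n+1)/(2(2n+1))`. -/
theorem rnf_one_one_invariant (n : ℕ) (hn : 2 ≤ n) (x y : Fin (n + 1) → ℂ)
    (hden : Matrix.trace (adM n x * adM n y) ≠ 0) :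
    Matrix.trace (adM n x) * Matrix.trace (adM n y) =
      (3 * (n : ℂ) * ((n : ℂ) + 1)) / (2 * (2 * (n : ℂ) + 1)) *
        Matrix.trace (adM n x * adM n y) := by
  have h1 : 1 ≤ n := by omega
  rw [trace_adM n h1 x, trace_adM n h1 y, trace_mul_adM n h1 x y, sum_d, sum_d2]
  set T1 := ∑ i ∈ Finset.range n, ((i : ℂ) + 1) with hT1
  set T2 := ∑ i ∈ Finset.range n, ((i : ℂ) + 1) ^ 2 with hT2
  have g1 := gauss1 n
  have g2 := gauss2 n
  have hne : (2 * (n : ℂ) + 1) ≠ 0 := by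
    have h : ((2 * n + 1 : ℕ) : ℂ) ≠ 0 := Nat.cast_ne_zero.mpr (by omega)
    push_cast at h
    exact h
  have e1 : T1 = (n : ℂ) * ((n : ℂ) + 1) / 2 := by linear_combination g1 / 2
  have e2 : T2 = (n : ℂ) * ((n : ℂ) + 1) * (2 * (n : ℂ) + 1) / 6 := by
    linear_combination g2 / 6
  rw [e1, e2]
  rw [eq_comm, div_mul_eq_mul_div, div_eq_iff (mul_ne_zero two_ne_zero hne)]
  ring
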